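/- If a monomial x_{i_1} ∧ ⋯ ∧ x_{i_n} (with i_1 < ⋯ < i_n) is an element of the NBC basis of the Orlik–Solomon algebra of an ordered hyperplane arrangement, then the flag F = (H_{i_n} ⊇ H_{i_{n−1}} ∩ H_{i_n} ⊇ ⋯ ⊇ H_{i_1} ∩ ⋯ ∩ H_{i_n}) is descendent, and conversely each descendent flag F gives an NBC monomial x_{j_{F,1}} ∧ ⋯ ∧ x_{j_{F,n}}; this correspondence is a bijection between NBC monomials of degree n and descendent flags of length n. -/

import Mathlib

noncomputable section

lemma aux_finrank_inf {n : ℕ} (W : Submodule ℂ (Fin (n+1) → ℂ)) (f : (Fin (n+1) → ℂ) →ₗ[ℂ] ℂ)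
    (h : ¬ W ≤ LinearMap.ker f) :
    Module.finrank ℂ ↥(W ⊓ LinearMap.ker f) + 1 = Module.finrank ℂ ↥W := by
  have hlt : W ⊓ LinearMap.ker f < W :=
    lt_of_le_of_ne inf_le_left (fun he => h (inf_eq_left.mp he))
  have h3 := Submodule.finrank_lt_finrank_of_lt hlt
  obtain ⟨x, hxW, hfx⟩ : ∃ x ∈ W, f x ≠ 0 := by
    rw [SetLike.le_def] at h; push_neg at h
    simpa using h
  have hr : LinearMap.range f = ⊤ := by
    rw [LinearMap.range_eq_top]
    intro c
    exact ⟨(c / f x) • x, by rw [map_smul, smul_eq_mul, div_mul_cancel₀ c hfx]⟩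
  have hker : Module.finrank ℂ ↥(LinearMap.ker f) = n := by
    have h4 := LinearMap.finrank_range_add_finrank_ker f
    rw [hr, finrank_top] at h4
    simp only [Module.finrank_self, Module.finrank_fin_fun] at h4 ⊢
    omega
  have h1 := Submodule.finrank_sup_add_finrank_inf_eq W (LinearMap.ker f)
  have h2 : Module.finrank ℂ ↥(W ⊔ LinearMap.ker f) ≤ n + 1 := by
    have h5 := Submodule.finrank_le (W ⊔ LinearMap.ker f)
    simpa using h5
  rw [hker] at h1
  omega

lemma aux_finrank_iInf {n : ℕ} {ι : Type} [Fintype ι] [DecidableEq ι]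
    (f : ι → ((Fin (n+1) → ℂ) →ₗ[ℂ] ℂ)) (hf : LinearIndependent ℂ f) (s : Finset ι) :
    Module.finrank ℂ ↥(⨅ m ∈ s, LinearMap.ker (f m)) + s.card = n + 1 := by
  classical
  induction s using Finset.induction_on with
  | empty =>
    rw [show (⨅ m ∈ (∅ : Finset ι), LinearMap.ker (f m)) = ⊤ by simp, finrank_top]
    simp
  | @insert a s ha ih =>
    have key : ¬ (⨅ m ∈ s, LinearMap.ker (f m)) ≤ LinearMap.ker (f a) := by
      intro hle
      have hle' : (⨅ m : {x // x ∈ s}, LinearMap.ker (f m)) ≤ LinearMap.ker (f a) :=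
        le_trans (le_iInf₂ fun m hm => iInf_le _ (⟨m, hm⟩ : {x // x ∈ s})) hle
      have hsp := mem_span_of_iInf_ker_le_ker hle'
      have hra : Set.range (fun m : {x // x ∈ s} => f m) = f '' (s : Set ι) := by
        ext y; simp [Set.mem_image]
      rw [hra] at hsp
      exact hf.notMem_span_image (by simpa using ha) hsp
    rw [Finset.iInf_insert, Finset.card_insert_of_notMem ha, inf_comm]
    have h6 := aux_finrank_inf (⨅ m ∈ s, LinearMap.ker (f m)) (f a) key
    omega

/-- The flat of a central arrangement (modelling an arrangement in `ℂP^n` by kernels of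
linear forms on `ℂ^{n+1}`) determined by a set of hyperplane indices. -/
def arrFlat (n l : ℕ) (α : Fin l → ((Fin (n + 1) → ℂ) →ₗ[ℂ] ℂ)) (S : Finset (Fin l)) :
    Submodule ℂ (Fin (n + 1) → ℂ) :=
  ⨅ i ∈ S, LinearMap.ker (α i)

/-- The minimal index (as a natural number) of a hyperplane of the arrangement containing
the subspace `P` (junk value if there is none). -/
def minIdx (n l : ℕ) (α : Fin l → ((Fin (n + 1) → ℂ) →ₗ[ℂ] ℂ))
    (P : Submodule ℂ (Fin (n + 1) → ℂ)) : ℕ :=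
  sInf {j : ℕ | ∃ hj : j < l, P ≤ LinearMap.ker (α ⟨j, hj⟩)}

/-- `i_1 < ⋯ < i_n`, the forms are linearly independent, and each `H_{i_k}` is the
minimal-index hyperplane containing `H_{i_k} ∩ ⋯ ∩ H_{i_n}`: an NBC monomial. -/
def IsNBC (n l : ℕ) (α : Fin l → ((Fin (n + 1) → ℂ) →ₗ[ℂ] ℂ)) (i : Fin n → Fin l) : Prop :=
  StrictMono i ∧ LinearIndependent ℂ (fun k => α (i k)) ∧
    ∀ k : Fin n,
      minIdx n l α (⨅ m ∈ Finset.univ.filter (fun m : Fin n => k ≤ m),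
        LinearMap.ker (α (i m))) = (i k : ℕ)

/-- A (complete, length `n`) flag of flats of the arrangement: an increasing chain of
flats `S_1 ⊆ ⋯ ⊆ S_n` with `S_k` of linear dimension `k` (projective dimension `k-1`). -/
def IsFlag (n l : ℕ) (α : Fin l → ((Fin (n + 1) → ℂ) →ₗ[ℂ] ℂ))
    (S : Fin n → Submodule ℂ (Fin (n + 1) → ℂ)) : Prop :=
  Monotone S ∧ (∀ k, ∃ T : Finset (Fin l), S k = arrFlat n l α T) ∧
    ∀ k : Fin n, Module.finrank ℂ (S k) = (k : ℕ) + 1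

/-- A flag is descendent if the minimal indices `j_{F,k}` are strictly increasing. -/
def IsDescendent (n l : ℕ) (α : Fin l → ((Fin (n + 1) → ℂ) →ₗ[ℂ] ℂ))
    (S : Fin n → Submodule ℂ (Fin (n + 1) → ℂ)) : Prop :=
  StrictMono fun k => minIdx n l α (S k)

/-- The correspondence sending an NBC monomial `x_{i_1} ∧ ⋯ ∧ x_{i_n}` to the flag
`(H_{i_n} ⊇ H_{i_{n-1}} ∩ H_{i_n} ⊇ ⋯ ⊇ H_{i_1} ∩ ⋯ ∩ H_{i_n})` is a bijection between
NBC monomials of degree `n` and descendent flags of length `n`. -/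

theorem stmt_11 (n l : ℕ) (α : Fin l → ((Fin (n + 1) → ℂ) →ₗ[ℂ] ℂ)) (hα : ∀ i, α i ≠ 0) :
    Set.BijOn
      (fun (i : Fin n → Fin l) (k : Fin n) =>
        ⨅ m ∈ Finset.univ.filter (fun m : Fin n => k ≤ m), LinearMap.ker (α (i m)))
      {i | IsNBC n l α i}
      {S | IsFlag n l α S ∧ IsDescendent n l α S} := by
  classical
  refine ⟨?_, ?_, ?_⟩
  · -- MapsTo
    intro i hi
    obtain ⟨hmono, hind, hmin⟩ := hi
    refine ⟨⟨?_, ?_, ?_⟩, ?_⟩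
    · -- Monotone
      intro k k' hkk'
      refine le_iInf₂ fun m hm => ?_
      simp only [Finset.mem_filter, Finset.mem_univ, true_and] at hm
      have hkm : k ≤ m := hkk'.trans hm
      exact iInf₂_le m (by simp only [Finset.mem_filter, Finset.mem_univ, true_and]; exact hkm)
    · -- flats
      intro k
      refine ⟨(Finset.univ.filter (fun m : Fin n => k ≤ m)).image i, ?_⟩
      unfold arrFlat
      apply le_antisymm
      · refine le_iInf₂ fun j hj => ?_
        obtain ⟨m, hm, rfl⟩ := Finset.mem_image.mp hj
        exact iInf₂_le m hm
      · exact le_iInf₂ fun m hm => iInf₂_le (i m) (Finset.mem_image_of_mem i hm)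
    · -- finrank
      intro k
      dsimp only
      have h1 := aux_finrank_iInf (fun m => α (i m)) hind
        (Finset.univ.filter (fun m : Fin n => k ≤ m))
      have h2 : (Finset.univ.filter (fun m : Fin n => k ≤ m)) = Finset.Ici k := by
        ext m; simp
      have h3 : (Finset.univ.filter (fun m : Fin n => k ≤ m)).card = n - (k : ℕ) := by
        rw [h2, Fin.card_Ici]
      have hk := k.isLt
      omega
    · -- descendent
      intro a b hab
      dsimp only
      rw [hmin a, hmin b]
      exact hmono hab
  · -- InjOn
    intro i1 h1 i2 h2 heq
    funext k
    have e1 := h1.2.2 k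
    have e2 := h2.2.2 k
    have e3 := congrArg (minIdx n l α) (congrFun heq k)
    simp only at e3
    rw [e1, e2] at e3
    exact Fin.ext e3
  · -- SurjOn
    rintro S ⟨⟨hSmono, hSflat, hSrank⟩, hdesc⟩
    have hex : ∀ k : Fin n, (minIdx n l α (S k)) ∈
        {j : ℕ | ∃ hj : j < l, S k ≤ LinearMap.ker (α ⟨j, hj⟩)} := by
      intro k
      apply Nat.sInf_mem
      obtain ⟨T, hT⟩ := hSflat k
      obtain ⟨j, hj⟩ : T.Nonempty := by
        rcases T.eq_empty_or_nonempty with rfl | h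
        · exfalso
          have h1 := hSrank k
          have hT' : S k = ⊤ := by rw [hT]; unfold arrFlat; simp
          rw [hT', finrank_top] at h1
          simp only [Module.finrank_fin_fun] at h1
          have hk := k.isLt; omega
        · exact h
      exact ⟨(j : ℕ), j.isLt, by rw [hT]; exact iInf₂_le j hj⟩
    have hltl : ∀ k : Fin n, minIdx n l α (S k) < l := fun k => (hex k).choose
    set i : Fin n → Fin l := fun k => ⟨minIdx n l α (S k), hltl k⟩ with hidef
    have hle : ∀ k : Fin n, S k ≤ LinearMap.ker (α (i k)) := by
      intro k
      obtain ⟨hj, h⟩ := hex k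
      exact h
    have hidesc : StrictMono i := fun a b hab => hdesc hab
    have hnle : ∀ k k' : Fin n, (k' : ℕ) = (k : ℕ) + 1 →
        ¬ S k' ≤ LinearMap.ker (α (i k)) := by
      intro k k' hk' hcon
      have h1 : minIdx n l α (S k') ≤ minIdx n l α (S k) := Nat.sInf_le ⟨hltl k, hcon⟩
      have h2 : minIdx n l α (S k) < minIdx n l α (S k') :=
        hdesc (show k < k' by rw [Fin.lt_def]; omega)
      omega
    have main : ∀ j : ℕ, ∀ k : Fin n, (k : ℕ) + j + 1 = n →
        (⨅ m ∈ Finset.univ.filter (fun m : Fin n => k ≤ m),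
          LinearMap.ker (α (i m))) = S k := by
      intro j
      induction j with
      | zero =>
        intro k hk
        have hfil : Finset.univ.filter (fun m : Fin n => k ≤ m) = {k} := by
          ext m
          simp only [Finset.mem_filter, Finset.mem_univ, true_and, Finset.mem_singleton]
          constructor
          · intro h
            have hm := m.isLt
            rw [Fin.le_def] at h
            exact Fin.ext (by omega)
          · rintro rfl; exact le_refl _
        rw [hfil]
        have hsing : (⨅ m ∈ ({k} : Finset (Fin n)), LinearMap.ker (α (i m)))
            = LinearMap.ker (α (i k)) := by simp
        rw [hsing]
        symm
        apply Submodule.eq_of_le_of_finrank_le (hle k)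
        have hk1 : ¬ (⊤ : Submodule ℂ (Fin (n+1) → ℂ)) ≤ LinearMap.ker (α (i k)) := by
          rw [top_le_iff, LinearMap.ker_eq_top]
          exact hα (i k)
        have h7 := aux_finrank_inf ⊤ (α (i k)) hk1
        rw [top_inf_eq, finrank_top] at h7
        simp only [Module.finrank_fin_fun] at h7
        rw [hSrank k]
        omega
      | succ j ih =>
        intro k hk
        have hk1n : (k : ℕ) + 1 < n := by omega
        have ihk' := ih ⟨(k : ℕ) + 1, hk1n⟩ (by simp; omega)
        have hge : S k ≤ ⨅ m ∈ Finset.univ.filter (fun m : Fin n => k ≤ m),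
            LinearMap.ker (α (i m)) := by
          refine le_iInf₂ fun m hm => ?_
          simp only [Finset.mem_filter, Finset.mem_univ, true_and] at hm
          exact le_trans (hSmono hm) (hle m)
        symm
        apply Submodule.eq_of_le_of_finrank_le hge
        have hsub : (⨅ m ∈ Finset.univ.filter (fun m : Fin n => k ≤ m),
            LinearMap.ker (α (i m)))
            ≤ S ⟨(k : ℕ) + 1, hk1n⟩ ⊓ LinearMap.ker (α (i k)) := by
          apply le_inf
          · rw [← ihk']
            refine le_iInf₂ fun m hm => ?_
            simp only [Finset.mem_filter, Finset.mem_univ, true_and] at hm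
            refine iInf₂_le m ?_
            simp only [Finset.mem_filter, Finset.mem_univ, true_and]
            rw [Fin.le_def] at hm ⊢
            simp only at hm
            omega
          · exact iInf₂_le k (by simp)
        have hlt2 : S ⟨(k : ℕ) + 1, hk1n⟩ ⊓ LinearMap.ker (α (i k)) < S ⟨(k : ℕ) + 1, hk1n⟩ :=
          lt_of_le_of_ne inf_le_left
            (fun he => hnle k ⟨(k : ℕ) + 1, hk1n⟩ rfl (inf_eq_left.mp he))
        have h9 := Submodule.finrank_lt_finrank_of_lt hlt2
        have h10 := Submodule.finrank_mono hsub
        rw [hSrank ⟨(k : ℕ) + 1, hk1n⟩] at h9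
        rw [hSrank k]
        simp only at h9
        omega
    have hmain : ∀ k : Fin n,
        (⨅ m ∈ Finset.univ.filter (fun m : Fin n => k ≤ m),
          LinearMap.ker (α (i m))) = S k :=
      fun k => main (n - 1 - (k : ℕ)) k (by have := k.isLt; omega)
    have hv : ∀ k : Fin n, ∃ v, α (i k) v ≠ 0 ∧ ∀ m : Fin n, k < m → α (i m) v = 0 := by
      intro k
      by_cases hkn : (k : ℕ) + 1 = n
      · obtain ⟨v, hv⟩ := DFunLike.ne_iff.mp (hα (i k))
        refine ⟨v, by simpa using hv, fun m hm => ?_⟩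
        exfalso
        have := m.isLt
        rw [Fin.lt_def] at hm
        omega
      · have hk1n : (k : ℕ) + 1 < n := by have := k.isLt; omega
        have hn := hnle k ⟨(k : ℕ) + 1, hk1n⟩ rfl
        rw [SetLike.le_def] at hn
        push_neg at hn
        obtain ⟨v, hvS, hvk⟩ := hn
        refine ⟨v, by simpa using hvk, fun m hm => ?_⟩
        have hmem : S ⟨(k : ℕ) + 1, hk1n⟩ ≤ LinearMap.ker (α (i m)) := by
          refine le_trans (hSmono ?_) (hle m)
          rw [Fin.le_def]
          rw [Fin.lt_def] at hm
          simp only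
          omega
        simpa using hmem hvS
    have hind : LinearIndependent ℂ (fun k => α (i k)) := by
      rw [Fintype.linearIndependent_iff]
      intro g hg
      choose v hv1 hv2 using hv
      have key : ∀ N : ℕ, ∀ k : Fin n, (k : ℕ) < N → g k = 0 := by
        intro N
        induction N with
        | zero => intro k hk; omega
        | succ N ih =>
          intro k hk
          rcases Nat.lt_or_ge (k : ℕ) N with h | h
          · exact ih k h
          have hgv := congrArg (fun φ => φ (v k)) hg
          simp only [LinearMap.coe_sum, Finset.sum_apply, LinearMap.smul_apply,
            smul_eq_mul, LinearMap.zero_apply] at hgv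
          rw [Finset.sum_eq_single k] at hgv
          · rcases mul_eq_zero.mp hgv with h' | h'
            · exact h'
            · exact absurd h' (hv1 k)
          · intro m _ hne
            rcases lt_or_gt_of_ne hne with hlt' | hgt'
            · rw [ih m (by rw [Fin.lt_def] at hlt'; omega)]; ring
            · rw [hv2 k m hgt']; ring
          · intro h'; exact absurd (Finset.mem_univ k) h'
      exact fun k => key n k k.isLt
    refine ⟨i, ⟨hidesc, hind, ?_⟩, ?_⟩
    · intro k
      rw [hmain k]
    · funext k
      exact hmain k

end
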